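/- Every flow assignment f (antisymmetric function on darts respecting capacities) can be decomposed as f = ρ + g where ρ is a circulation (obeys conservation at all nodes) and g is an acyclic flow assignment, i.e., there is no directed cycle all of whose darts carry strictly positive g-flow. -/

import Mathlib

open scoped Classical

section Aux

variable {V D : Type}

lemma walk_count_aux [DecidableEq V] (hd tl : D → V) (w : V) :
    ∀ (L : List D), L.Chain' (fun a b => hd a = tl b) → ∀ (hne : L ≠ []),
    ((L.filter (fun d => hd d = w)).length : ℤ) - ((L.filter (fun d => tl d = w)).length : ℤ)
      = (if hd (L.getLast hne) = w then 1 else 0)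
        - (if tl (L.head hne) = w then 1 else 0)
  | [d], _, _ => by
      simp only [List.filter_cons, List.filter_nil, decide_eq_true_eq,
        List.getLast_singleton, List.head_cons]
      split_ifs <;> simp_all
  | a :: b :: rest, hch, _ => by
      have ih := walk_count_aux hd tl w (b :: rest) hch.tail (by simp)
      have hab : hd a = tl b := (List.isChain_cons_cons.1 hch).1
      rw [List.getLast_cons (by simp), List.head_cons]
      rw [List.head_cons] at ih
      rw [← hab] at ih
      simp only [List.filter_cons, decide_eq_true_eq, apply_ite List.length,
        List.length_cons] at ih ⊢
      split_ifs at ih ⊢ <;> (push_cast at ih ⊢; omega)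

lemma sum_count_aux [Fintype D] (p : D → Prop) [DecidablePred p] :
    ∀ (L : List D), ∑ d ∈ Finset.univ.filter (fun d => p d), L.count d
      = (L.filter (fun d => p d)).length
  | [] => by simp
  | a :: T => by
      have ih := sum_count_aux p T
      simp only [List.count_cons, List.filter_cons, decide_eq_true_eq,
        apply_ite List.length, List.length_cons, beq_iff_eq]
      rw [Finset.sum_add_distrib, ih]
      have : ∑ x ∈ Finset.univ.filter (fun d => p d), (if a = x then 1 else 0)
          = if a ∈ Finset.univ.filter (fun d => p d) then 1 else 0 :=
        Finset.sum_ite_eq (Finset.univ.filter (fun d => p d)) a (fun _ => 1)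
      rw [this]
      simp only [Finset.mem_filter, Finset.mem_univ, true_and]
      split_ifs <;> omega

end Aux

/-- A directed graph given by darts: each dart has a tail, a head, and a reverse dart. -/
structure Dgraph (V D : Type) where
  tail : D → V
  head : D → V
  rev : D → D
  rev_rev : ∀ d, rev (rev d) = d
  tail_rev : ∀ d, tail (rev d) = head d
  head_rev : ∀ d, head (rev d) = tail d

namespace Dgraph

variable {V D : Type}

/-- an antisymmetric flow assignment -/
def Antisym (G : Dgraph V D) (f : D → ℝ) : Prop :=
  ∀ d, f (G.rev d) = - f d

/-- net inflow of a flow assignment at a node -/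
noncomputable def inflow [Fintype D] [DecidableEq V] (G : Dgraph V D) (f : D → ℝ) (v : V) : ℝ :=
  ∑ d ∈ Finset.univ.filter (fun d => G.head d = v), f d

/-- one step along a dart of strictly positive capacity -/
def ResStep (G : Dgraph V D) (cap : D → ℝ) (u v : V) : Prop :=
  ∃ d, G.tail d = u ∧ G.head d = v ∧ 0 < cap d

/-- existence of a path all of whose darts have strictly positive capacity -/
def ResReach (G : Dgraph V D) (cap : D → ℝ) (u v : V) : Prop :=
  Relation.ReflTransGen (G.ResStep cap) u v

/-- a pseudoflow: antisymmetric and respecting all capacities -/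
def Pseudoflow (G : Dgraph V D) (c f : D → ℝ) : Prop :=
  G.Antisym f ∧ ∀ d, f d ≤ c d

lemma transGen_walk (G : Dgraph V D) (cap : D → ℝ) {u v : V}
    (h : Relation.TransGen (G.ResStep cap) u v) :
    ∃ (L : List D) (hne : L ≠ []),
      L.Chain' (fun a b => G.head a = G.tail b) ∧
      (∀ d ∈ L, 0 < cap d) ∧ G.tail (L.head hne) = u ∧ G.head (L.getLast hne) = v := by
  induction h with
  | single hstep =>
      obtain ⟨d, h1, h2, h3⟩ := hstep
      exact ⟨[d], by simp, List.IsChain.singleton _, by simp [h3], by simp [h1], by simp [h2]⟩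
  | tail hab hbc ih =>
      obtain ⟨L, hne, hch, hpos, hhd, hlast⟩ := ih
      obtain ⟨d, h1, h2, h3⟩ := hbc
      refine ⟨L ++ [d], by simp, ?_, ?_, ?_, ?_⟩
      · refine List.isChain_append.2 ⟨hch, by simp, ?_⟩
        intro x hx y hy
        simp only [List.head?_cons, Option.mem_def, Option.some.injEq] at hy
        rw [List.getLast?_eq_getLast hne] at hx
        simp only [Option.mem_def, Option.some.injEq] at hx
        subst hx; subst hy
        rw [hlast, h1]
      · intro x hx
        rcases List.mem_append.1 hx with h | h
        · exact hpos x h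
        · simp at h; subst h; exact h3
      · rwa [List.head_append_of_ne_nil hne]
      · rw [List.getLast_append]; exact h2

/-- key step: cancel one positive cycle. -/
lemma cancel_cycle [Fintype D] [Fintype V] [DecidableEq V] (G : Dgraph V D) (f : D → ℝ)
    (hanti : G.Antisym f) {v : V} (hcyc : Relation.TransGen (G.ResStep f) v v) :
    ∃ σ : D → ℝ, G.Antisym σ ∧ (∀ w, G.inflow σ w = 0) ∧
      (Finset.univ.filter fun d => 0 < f d - σ d).card
        < (Finset.univ.filter fun d => 0 < f d).card := by
  obtain ⟨L, hne, hch, hpos, hhd, hlast⟩ := G.transGen_walk f hcyc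
  have hclosed : G.head (L.getLast hne) = G.tail (L.head hne) := by rw [hlast, hhd]
  -- no dart and its reverse both on the walk
  have hrevnot : ∀ d ∈ L, G.rev d ∉ L := by
    intro d hd hrd
    have h1 := hpos d hd
    have h2 := hpos _ hrd
    rw [hanti d] at h2; linarith
  -- choose the bottleneck dart
  obtain ⟨d₀, hd₀mem, hd₀min⟩ :=
    L.toFinset.exists_min_image (fun d => f d / (L.count d : ℝ))
      ⟨L.head hne, by simp [List.head_mem hne]⟩
  rw [List.mem_toFinset] at hd₀mem
  set ε : ℝ := f d₀ / (L.count d₀ : ℝ) with hε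
  have hcount₀ : 0 < L.count d₀ := List.count_pos_iff.2 hd₀mem
  have hεpos : 0 < ε := div_pos (hpos d₀ hd₀mem) (by exact_mod_cast hcount₀)
  have hεle : ∀ d ∈ L, ε * (L.count d : ℝ) ≤ f d := by
    intro d hd
    have hc : 0 < (L.count d : ℝ) := by exact_mod_cast List.count_pos_iff.2 hd
    have := hd₀min d (List.mem_toFinset.2 hd)
    calc ε * (L.count d : ℝ) ≤ (f d / (L.count d : ℝ)) * (L.count d : ℝ) := by
          exact mul_le_mul_of_nonneg_right this (le_of_lt hc)
      _ = f d := div_mul_cancel₀ _ (ne_of_gt hc)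
  refine ⟨fun d => ε * ((L.count d : ℝ) - (L.count (G.rev d) : ℝ)), ?_, ?_, ?_⟩
  · intro d; simp only [G.rev_rev]; ring
  · -- circulation
    intro w
    unfold inflow
    have hsum : ∑ d ∈ Finset.univ.filter (fun d => G.head d = w),
        (ε * ((L.count d : ℝ) - (L.count (G.rev d) : ℝ)))
        = ε * ((∑ d ∈ Finset.univ.filter (fun d => G.head d = w), (L.count d : ℝ))
            - (∑ d ∈ Finset.univ.filter (fun d => G.head d = w), (L.count (G.rev d) : ℝ))) := by
      rw [← Finset.sum_sub_distrib, Finset.mul_sum]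
    rw [hsum]
    have hB : ∑ d ∈ Finset.univ.filter (fun d => G.head d = w), (L.count (G.rev d) : ℝ)
        = ∑ d ∈ Finset.univ.filter (fun d => G.tail d = w), (L.count d : ℝ) := by
      refine Finset.sum_nbij' (fun d => G.rev d) (fun d => G.rev d) ?_ ?_ ?_ ?_ ?_
      · intro a ha; simp only [Finset.mem_filter, Finset.mem_univ, true_and] at ha ⊢
        rw [G.tail_rev]; exact ha
      · intro a ha; simp only [Finset.mem_filter, Finset.mem_univ, true_and] at ha ⊢
        rw [G.head_rev]; exact ha
      · intro a _; exact G.rev_rev a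
      · intro a _; exact G.rev_rev a
      · intro a _; rfl
    rw [hB]
    have hA := sum_count_aux (fun d => G.head d = w) L
    have hT := sum_count_aux (fun d => G.tail d = w) L
    have hwc := walk_count_aux G.head G.tail w L hch hne
    rw [hclosed] at hwc
    simp only [sub_self] at hwc
    have hlen : (L.filter (fun d => G.head d = w)).length
        = (L.filter (fun d => G.tail d = w)).length := by omega
    have : (∑ d ∈ Finset.univ.filter (fun d => G.head d = w), (L.count d : ℝ))
        = (∑ d ∈ Finset.univ.filter (fun d => G.tail d = w), (L.count d : ℝ)) := by
      have hnat : (∑ d ∈ Finset.univ.filter (fun d => G.head d = w), L.count d)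
          = ∑ d ∈ Finset.univ.filter (fun d => G.tail d = w), L.count d := by
        rw [hA, hT, hlen]
      exact_mod_cast hnat
    rw [this]; ring
  · -- support decreases
    apply Finset.card_lt_card
    constructor
    · intro d hd
      simp only [Finset.mem_filter, Finset.mem_univ, true_and] at hd ⊢
      by_cases hdL : d ∈ L
      · exact hpos d hdL
      by_cases hrdL : G.rev d ∈ L
      · exfalso
        have hc0 : L.count d = 0 := List.count_eq_zero.2 hdL
        have hle := hεle _ hrdL
        rw [hanti d] at hle
        rw [hc0] at hd
        simp at hd
        linarith
      · have hc0 : L.count d = 0 := List.count_eq_zero.2 hdL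
        have hc1 : L.count (G.rev d) = 0 := List.count_eq_zero.2 hrdL
        rw [hc0, hc1] at hd
        simpa using hd
    · intro hsub
      have hd₀f : d₀ ∈ Finset.univ.filter fun d => 0 < f d := by
        simp only [Finset.mem_filter, Finset.mem_univ, true_and]
        exact hpos d₀ hd₀mem
      have := hsub hd₀f
      simp only [Finset.mem_filter, Finset.mem_univ, true_and] at this
      have hc0 : L.count (G.rev d₀) = 0 := List.count_eq_zero.2 (hrevnot d₀ hd₀mem)
      rw [hc0] at this
      have : 0 < f d₀ - ε * (L.count d₀ : ℝ) := by simpa using this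
      have heq : ε * (L.count d₀ : ℝ) = f d₀ := by
        rw [hε]; exact div_mul_cancel₀ _ (by exact_mod_cast ne_of_gt hcount₀)
      linarith

lemma decomp [Fintype D] [Fintype V] [DecidableEq V] (G : Dgraph V D) :
    ∀ (n : ℕ) (f : D → ℝ), (Finset.univ.filter fun d => 0 < f d).card ≤ n → G.Antisym f →
    ∃ ρ g : D → ℝ, G.Antisym ρ ∧ (∀ v, G.inflow ρ v = 0) ∧ G.Antisym g ∧
      (∀ v, ¬ Relation.TransGen (G.ResStep g) v v) ∧ (∀ d, f d = ρ d + g d) := by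
  intro n
  induction n with
  | zero =>
      intro f hcard hanti
      by_cases hac : ∀ v, ¬ Relation.TransGen (G.ResStep f) v v
      · exact ⟨0, f, fun d => by simp, fun v => by simp [inflow], hanti, hac,
          fun d => by simp⟩
      · push_neg at hac
        obtain ⟨v, hv⟩ := hac
        obtain ⟨σ, _, _, hlt⟩ := G.cancel_cycle f hanti hv
        omega
  | succ n ih =>
      intro f hcard hanti
      by_cases hac : ∀ v, ¬ Relation.TransGen (G.ResStep f) v v
      · exact ⟨0, f, fun d => by simp, fun v => by simp [inflow], hanti, hac,
          fun d => by simp⟩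
      · push_neg at hac
        obtain ⟨v, hv⟩ := hac
        obtain ⟨σ, hσanti, hσflow, hlt⟩ := G.cancel_cycle f hanti hv
        have hanti' : G.Antisym (fun d => f d - σ d) := by
          intro d; simp [hanti d, hσanti d]; ring
        obtain ⟨ρ, g, hρa, hρ0, hga, hgac, hdec⟩ :=
          ih (fun d => f d - σ d) (by omega) hanti'
        refine ⟨fun d => ρ d + σ d, g, ?_, ?_, hga, hgac, ?_⟩
        · intro d; simp [hρa d, hσanti d]; ring
        · intro w
          have : G.inflow (fun d => ρ d + σ d) w = G.inflow ρ w + G.inflow σ w := by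
            simp [inflow, Finset.sum_add_distrib]
          rw [this, hρ0 w, hσflow w]; ring
        · intro d
          have := hdec d
          show f d = ρ d + σ d + g d
          linarith

end Dgraph

/-- decomposition of a flow assignment into a circulation plus an acyclic flow. -/
theorem stmt4 {V D : Type} [Fintype D] [Fintype V] [DecidableEq V]
    (G : Dgraph V D) (c f : D → ℝ)
    (hanti : G.Antisym f) (hcap : ∀ d, f d ≤ c d) :
    ∃ ρ g : D → ℝ,
      G.Antisym ρ ∧ (∀ v, G.inflow ρ v = 0) ∧
      G.Antisym g ∧
      (∀ v, ¬ Relation.TransGen (G.ResStep g) v v) ∧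
      (∀ d, f d = ρ d + g d) := by
  exact G.decomp (Finset.univ.filter fun d => 0 < f d).card f le_rfl hanti
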